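/- arXiv:2604.11746 — 3 statements merged into one kernel-verified Lean document; each statement's English description precedes it below -/
import Mathlib

section
/- Let u ∈ ℝ, b > 0, and assume M : ℝ×ℝ → ℝ is twice differentiable with continuous second derivative M′′ ≥ 0 (with respect to the first argument) and continuous cross derivative ∂₁₂M. Then the map v ↦ prox_{bM(·,v)}(u) is differentiable with derivative ∂_v prox_{bM(·,v)}(u) = −b·∂₁₂M(prox_{bM(·,v)}(u), v) / (b·M′′(prox_{bM(·,v)}(u), v) + 1), and consequently v ↦ prox_{bM(·,v)}(u) is Lipschitz continuous with Lipschitz constant sup_{v∈ℝ} |b·∂₁₂M(prox_{bM(·,v)}(u), v) / (b·M′′(prox_{bM(·,v)}(u), v) + 1)| (provided this supremum is finite). -/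
open scoped NNReal

noncomputable section

private lemma mvt_uIcc (f f' : ℝ → ℝ) (hf : ∀ x, HasDerivAt f (f' x) x) (a b : ℝ) :
    ∃ c ∈ Set.uIcc a b, f b - f a = f' c * (b - a) := by
  rcases lt_trichotomy a b with h | h | h
  · obtain ⟨c, hc, hc2⟩ := exists_hasDerivAt_eq_slope f f' h
      (fun x _ => (hf x).continuousAt.continuousWithinAt) (fun x hx => hf x)
    refine ⟨c, ?_, ?_⟩
    · exact Set.mem_uIcc.2 (Or.inl ⟨le_of_lt hc.1, le_of_lt hc.2⟩)
    · have hba : b - a ≠ 0 := sub_ne_zero.2 (ne_of_gt h)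
      field_simp at hc2
      linarith [hc2]
  · exact ⟨a, Set.left_mem_uIcc, by simp [h]⟩
  · obtain ⟨c, hc, hc2⟩ := exists_hasDerivAt_eq_slope f f' h
      (fun x _ => (hf x).continuousAt.continuousWithinAt) (fun x hx => hf x)
    refine ⟨c, ?_, ?_⟩
    · exact Set.mem_uIcc.2 (Or.inr ⟨le_of_lt hc.1, le_of_lt hc.2⟩)
    · have hba : a - b ≠ 0 := sub_ne_zero.2 (ne_of_gt h)
      field_simp at hc2
      linarith [hc2]

private lemma abs_sub_le_of_uIcc {a b c : ℝ} (h : c ∈ Set.uIcc a b) :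
    |c - a| ≤ |b - a| := by
  rcases Set.mem_uIcc.1 h with ⟨h1, h2⟩ | ⟨h1, h2⟩
  · rw [abs_sub_le_iff]
    constructor <;> linarith [le_abs_self (b - a), neg_abs_le (b - a), abs_nonneg (b - a)]
  · rw [abs_sub_le_iff]
    constructor <;> linarith [le_abs_self (b - a), neg_abs_le (b - a), abs_nonneg (b - a)]

/-- Proposition: derivative of the proximal operator with
respect to the response. Assume M is twice differentiable with continuous,
nonnegative second derivative M′′ (in the first argument) and continuous cross
derivative ∂₁₂M. For fixed u ∈ ℝ and b > 0, let P v := prox_{bM(·,v)}(u) be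
the minimizer of t ↦ b·M(t, v) + (t − u)²/2. Then P is differentiable with
  P′(v) = −b·∂₁₂M(P v, v) / (b·M′′(P v, v) + 1),
and consequently P is Lipschitz with constant
sup_v |b·∂₁₂M(P v, v)/(b·M′′(P v, v) + 1)| (provided it is finite). -/
theorem prox_hasDerivAt_response (M M1 M2 M12 : ℝ → ℝ → ℝ) (u b : ℝ) (hb : 0 < b)
    (hM1 : ∀ t v, HasDerivAt (fun s => M s v) (M1 t v) t)
    (hM2 : ∀ t v, HasDerivAt (fun s => M1 s v) (M2 t v) t)
    (hM2cont : Continuous fun tv : ℝ × ℝ => M2 tv.1 tv.2)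
    (hM2nonneg : ∀ t v, 0 ≤ M2 t v)
    (hM12 : ∀ t v, HasDerivAt (fun w => M1 t w) (M12 t v) v)
    (hM12cont : Continuous fun tv : ℝ × ℝ => M12 tv.1 tv.2)
    (P : ℝ → ℝ)
    (hP : ∀ v s, b * M (P v) v + (P v - u) ^ 2 / 2 ≤ b * M s v + (s - u) ^ 2 / 2) :
    (∀ v, HasDerivAt P (-(b * M12 (P v) v) / (b * M2 (P v) v + 1)) v) ∧
    (∀ K : ℝ≥0, (∀ v, |b * M12 (P v) v / (b * M2 (P v) v + 1)| ≤ K) →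
      LipschitzWith K P) := by
  -- stationarity
  have hstat : ∀ v, b * M1 (P v) v + (P v - u) = 0 := by
    intro v
    have hd : HasDerivAt (fun s => b * M s v + (s - u) ^ 2 / 2)
        (b * M1 (P v) v + (P v - u)) (P v) := by
      have h1 := (hM1 (P v) v).const_mul b
      have h2 : HasDerivAt (fun s : ℝ => (s - u) ^ 2 / 2) (P v - u) (P v) := by
        have h3 : HasDerivAt (fun s : ℝ => s - u) 1 (P v) := (hasDerivAt_id _).sub_const u
        have := (h3.fun_pow 2).div_const 2
        refine this.congr_deriv ?_
        norm_num
      exact h1.add h2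
    have hmin : IsLocalMin (fun s => b * M s v + (s - u) ^ 2 / 2) (P v) :=
      Filter.Eventually.of_forall fun s => hP v s
    exact hmin.hasDerivAt_eq_zero hd
  -- key identity
  have hkey : ∀ v w, ∃ ξ ∈ Set.uIcc (P v) (P w), ∃ η ∈ Set.uIcc v w,
      (P w - P v) * (1 + b * M2 ξ w) = -(b * M12 (P v) η) * (w - v) := by
    intro v w
    obtain ⟨ξ, hξ, hξ2⟩ := mvt_uIcc (fun s => M1 s w) (fun s => M2 s w)
      (fun t => hM2 t w) (P v) (P w)
    obtain ⟨η, hη, hη2⟩ := mvt_uIcc (fun s => M1 (P v) s) (fun s => M12 (P v) s)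
      (fun t => hM12 (P v) t) v w
    refine ⟨ξ, hξ, η, hη, ?_⟩
    have e1 := hstat v
    have e2 := hstat w
    linear_combination e2 - e1 - b * hξ2 - b * hη2
  choose ξ hξmem η hηmem heq using hkey
  have hden : ∀ v w, (1:ℝ) ≤ 1 + b * M2 (ξ v w) w := by
    intro v w
    nlinarith [hM2nonneg (ξ v w) w, hb]
  have hPdist : ∀ v w, |P w - P v| ≤ |b * M12 (P v) (η v w)| * |w - v| := by
    intro v w
    calc |P w - P v| ≤ |P w - P v| * (1 + b * M2 (ξ v w) w) :=
          le_mul_of_one_le_right (abs_nonneg _) (hden v w)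
      _ = |P w - P v| * |1 + b * M2 (ξ v w) w| := by
          rw [abs_of_pos (show (0:ℝ) < 1 + b * M2 (ξ v w) w by linarith [hden v w])]
      _ = |(P w - P v) * (1 + b * M2 (ξ v w) w)| := (abs_mul _ _).symm
      _ = |(-(b * M12 (P v) (η v w))) * (w - v)| := by rw [heq]
      _ = |b * M12 (P v) (η v w)| * |w - v| := by rw [abs_mul, abs_neg]
  -- continuity of P at each point
  have hPcont : ∀ v, Filter.Tendsto P (nhds v) (nhds (P v)) := by
    intro v
    obtain ⟨C, hC⟩ := (isCompact_Icc (a := v - 1) (b := v + 1)).exists_bound_of_continuousOn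
      ((hM12cont.comp (continuous_const.prodMk continuous_id)).continuousOn
        (f := fun t : ℝ => M12 (P v) t))
    rw [tendsto_iff_dist_tendsto_zero]
    apply squeeze_zero' (Filter.Eventually.of_forall fun w => dist_nonneg)
      (g := fun w => (|b| * C) * dist w v)
    · have : ∀ᶠ w in nhds v, |w - v| ≤ 1 := by
        have := Metric.ball_mem_nhds v (by norm_num : (0:ℝ) < 1)
        filter_upwards [this] with w hw
        rw [Metric.mem_ball, Real.dist_eq] at hw
        exact le_of_lt hw
      filter_upwards [this] with w hw
      have hηI : η v w ∈ Set.Icc (v - 1) (v + 1) := by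
        have h1 := abs_sub_le_of_uIcc (hηmem v w)
        rw [abs_sub_le_iff] at h1
        constructor <;> linarith [hw]
      have hCb := hC (η v w) hηI
      rw [Real.norm_eq_abs] at hCb
      have h2 : |b * M12 (P v) (η v w)| ≤ |b| * C := by
        rw [abs_mul]
        have : (0:ℝ) ≤ |b| := abs_nonneg _
        nlinarith [abs_nonneg (M12 (P v) (η v w))]
      calc dist (P w) (P v) = |P w - P v| := Real.dist_eq _ _
        _ ≤ |b * M12 (P v) (η v w)| * |w - v| := hPdist v w
        _ ≤ (|b| * C) * |w - v| := by
            apply mul_le_mul_of_nonneg_right h2 (abs_nonneg _)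
        _ = (|b| * C) * dist w v := by rw [Real.dist_eq]
    · have : Filter.Tendsto (fun w : ℝ => dist w v) (nhds v) (nhds (dist v v)) :=
        (continuous_id.dist continuous_const).tendsto v
      simpa using this.const_mul (|b| * C)
  -- derivative
  have hderiv : ∀ v, HasDerivAt P (-(b * M12 (P v) v) / (b * M2 (P v) v + 1)) v := by
    intro v
    rw [hasDerivAt_iff_tendsto_slope]
    have hηt : Filter.Tendsto (fun w => η v w) (nhds v) (nhds v) := by
      rw [tendsto_iff_dist_tendsto_zero]
      apply squeeze_zero' (Filter.Eventually.of_forall fun w => dist_nonneg)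
        (g := fun w => dist w v)
      · exact Filter.Eventually.of_forall fun w => by
          rw [Real.dist_eq, Real.dist_eq]; exact abs_sub_le_of_uIcc (hηmem v w)
      · simpa using (continuous_id.dist (continuous_const (y := v))).tendsto v
    have hξt : Filter.Tendsto (fun w => ξ v w) (nhds v) (nhds (P v)) := by
      rw [tendsto_iff_dist_tendsto_zero]
      apply squeeze_zero' (Filter.Eventually.of_forall fun w => dist_nonneg)
        (g := fun w => dist (P w) (P v))
      · exact Filter.Eventually.of_forall fun w => by
          rw [Real.dist_eq, Real.dist_eq]; exact abs_sub_le_of_uIcc (hξmem v w)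
      · have := (hPcont v).dist (tendsto_const_nhds (x := P v))
        simpa using this
    have hnum : Filter.Tendsto (fun w => -(b * M12 (P v) (η v w))) (nhds v)
        (nhds (-(b * M12 (P v) v))) := by
      have h1 : Filter.Tendsto (fun w => ((P v, η v w) : ℝ × ℝ)) (nhds v)
          (nhds (P v, v)) := tendsto_const_nhds.prodMk_nhds hηt
      exact ((hM12cont.tendsto _).comp h1).const_mul b |>.neg
    have hdent : Filter.Tendsto (fun w => 1 + b * M2 (ξ v w) w) (nhds v)
        (nhds (1 + b * M2 (P v) v)) := by
      have h1 : Filter.Tendsto (fun w => ((ξ v w, w) : ℝ × ℝ)) (nhds v)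
          (nhds (P v, v)) := hξt.prodMk_nhds Filter.tendsto_id
      exact (((hM2cont.tendsto _).comp h1).const_mul b).const_add 1
    have hne : (1 + b * M2 (P v) v) ≠ 0 := by
      have := hM2nonneg (P v) v
      positivity
    have hlim : Filter.Tendsto (fun w => -(b * M12 (P v) (η v w)) / (1 + b * M2 (ξ v w) w))
        (nhds v) (nhds (-(b * M12 (P v) v) / (b * M2 (P v) v + 1))) := by
      rw [show b * M2 (P v) v + 1 = 1 + b * M2 (P v) v by ring]
      exact hnum.div hdent hne
    refine (hlim.mono_left nhdsWithin_le_nhds).congr' ?_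
    filter_upwards [self_mem_nhdsWithin] with w hw
    have hwv : w - v ≠ 0 := sub_ne_zero.2 (by simpa using hw)
    have hd : (1 + b * M2 (ξ v w) w) ≠ 0 := by linarith [hden v w]
    rw [slope_def_field, div_eq_div_iff hd hwv]
    linear_combination -heq v w
  refine ⟨hderiv, ?_⟩
  intro K hK
  have hdiff : Differentiable ℝ P := fun v => (hderiv v).differentiableAt
  apply lipschitzWith_of_nnnorm_deriv_le hdiff
  intro v
  rw [(hderiv v).deriv]
  rw [← NNReal.coe_le_coe, coe_nnnorm, Real.norm_eq_abs]
  calc |(-(b * M12 (P v) v) / (b * M2 (P v) v + 1))|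
      = |b * M12 (P v) v / (b * M2 (P v) v + 1)| := by rw [neg_div, abs_neg]
    _ ≤ K := hK v

end
end

section
/- Let u, v ∈ ℝ, b > 0, and assume M : ℝ×ℝ → ℝ is twice differentiable with continuous second derivative satisfying 0 ≤ M′′ ≤ B₁₁ and continuous cross derivative satisfying |∂₁₂M| ≤ B₁₂, for some nonnegative constants B₁₁, B₁₂. Then |M′(prox_{bM(·,v)}(u), v)| ≤ |M′(0, 0)| + B₁₁|u| + B₁₂|v|. -/
noncomputable section

/-- Mean value bound: if f has derivative f' everywhere and |f'| ≤ C, then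
|f a - f b| ≤ C * |a - b|. -/
lemma abs_sub_le_of_deriv_bound {f f' : ℝ → ℝ} {C : ℝ}
    (hf : ∀ t, HasDerivAt f (f' t) t) (hC : ∀ t, |f' t| ≤ C) (a b : ℝ) :
    |f a - f b| ≤ C * |a - b| := by
  have := (convex_univ : Convex ℝ (Set.univ : Set ℝ)).norm_image_sub_le_of_norm_hasDerivWithin_le
    (f := f) (f' := f') (C := C)
    (fun t _ => (hf t).hasDerivWithinAt)
    (fun t _ => by simpa using hC t)
    (Set.mem_univ b) (Set.mem_univ a)
  simpa [Real.norm_eq_abs] using this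

/-- Proposition: a bound on M′ at the proximal point.
Assume M is twice differentiable with continuous second derivative satisfying
0 ≤ M′′ ≤ B₁₁ and continuous cross derivative satisfying |∂₁₂M| ≤ B₁₂. Then
for u, v ∈ ℝ and b > 0, with x := prox_{bM(·,v)}(u),
  |M′(x, v)| ≤ |M′(0, 0)| + B₁₁|u| + B₁₂|v|. -/
theorem M_deriv_prox_bound (M M1 M2 M12 : ℝ → ℝ → ℝ)
    (u v b B11 B12 : ℝ) (hb : 0 < b)
    (hB11 : 0 ≤ B11) (hB12 : 0 ≤ B12)
    (hM1 : ∀ t w, HasDerivAt (fun s => M s w) (M1 t w) t)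
    (hM2 : ∀ t w, HasDerivAt (fun s => M1 s w) (M2 t w) t)
    (hM2cont : Continuous fun tw : ℝ × ℝ => M2 tw.1 tw.2)
    (hM2rng : ∀ t w, 0 ≤ M2 t w ∧ M2 t w ≤ B11)
    (hM12 : ∀ t w, HasDerivAt (fun s => M1 t s) (M12 t w) w)
    (hM12cont : Continuous fun tw : ℝ × ℝ => M12 tw.1 tw.2)
    (hM12bd : ∀ t w, |M12 t w| ≤ B12)
    (x : ℝ)
    (hx : ∀ s, b * M x v + (x - u) ^ 2 / 2 ≤ b * M s v + (s - u) ^ 2 / 2) :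
    |M1 x v| ≤ |M1 0 0| + B11 * |u| + B12 * |v| := by
  -- First-order optimality: b * M1 x v + (x - u) = 0
  have hg : ∀ s : ℝ, HasDerivAt (fun s => b * M s v + (s - u) ^ 2 / 2)
      (b * M1 s v + (s - u)) s := by
    intro s
    have h1 := (hM1 s v).const_mul b
    have h2 : HasDerivAt (fun s : ℝ => (s - u) ^ 2 / 2) (s - u) s := by
      have := (((hasDerivAt_id s).sub_const u).pow 2).div_const 2
      refine HasDerivAt.congr_deriv this ?_
      simp [id_eq]
    exact h1.add h2
  have hmin : IsLocalMin (fun s => b * M s v + (s - u) ^ 2 / 2) x :=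
    Filter.Eventually.of_forall hx
  have hopt : b * M1 x v + (x - u) = 0 := hmin.hasDerivAt_eq_zero (hg x)
  have hux : u - x = b * M1 x v := by linarith
  -- MVT between x and u in the first variable
  have key : ∃ ξ, M1 u v - M1 x v = M2 ξ v * (u - x) := by
    rcases lt_trichotomy x u with h | h | h
    · obtain ⟨ξ, _, hξ⟩ := exists_hasDerivAt_eq_slope (fun s => M1 s v) (fun s => M2 s v) h
        (fun s _ => (hM2 s v).continuousAt.continuousWithinAt) (fun s _ => hM2 s v)
      have hne : u - x ≠ 0 := sub_ne_zero.mpr h.ne'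
      exact ⟨ξ, by rw [hξ, div_mul_cancel₀ _ hne]⟩
    · exact ⟨0, by simp [h]⟩
    · obtain ⟨ξ, _, hξ⟩ := exists_hasDerivAt_eq_slope (fun s => M1 s v) (fun s => M2 s v) h
        (fun s _ => (hM2 s v).continuousAt.continuousWithinAt) (fun s _ => hM2 s v)
      have hne : x - u ≠ 0 := sub_ne_zero.mpr h.ne'
      refine ⟨ξ, ?_⟩
      rw [hξ]
      field_simp
      ring
  obtain ⟨ξ, hξ⟩ := key
  -- M1 u v = M1 x v * (1 + b * M2 ξ v)
  have hfac : M1 u v = M1 x v * (1 + b * M2 ξ v) := by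
    rw [hux] at hξ; linarith [hξ]
  have hpos : (1 : ℝ) ≤ 1 + b * M2 ξ v := by
    nlinarith [(hM2rng ξ v).1, hb.le]
  have step1 : |M1 x v| ≤ |M1 u v| := by
    calc |M1 x v| = |M1 x v| * 1 := by ring
    _ ≤ |M1 x v| * |1 + b * M2 ξ v| := by
        apply mul_le_mul_of_nonneg_left _ (abs_nonneg _)
        rw [abs_of_pos (by linarith)]
        exact hpos
    _ = |M1 u v| := by rw [hfac, abs_mul]
  -- Step 2: vary the second variable
  have step2 : |M1 u v - M1 u 0| ≤ B12 * |v| := by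
    have := abs_sub_le_of_deriv_bound (f := fun w => M1 u w) (f' := fun w => M12 u w)
      (fun t => hM12 u t) (fun t => hM12bd u t) v 0
    simpa using this
  -- Step 3: vary the first variable at w = 0
  have step3 : |M1 u 0 - M1 0 0| ≤ B11 * |u| := by
    have := abs_sub_le_of_deriv_bound (f := fun s => M1 s 0) (f' := fun s => M2 s 0)
      (fun t => hM2 t 0) (fun t => abs_le.mpr ⟨by linarith [(hM2rng t 0).1],
        (hM2rng t 0).2⟩) u 0
    simpa using this
  calc |M1 x v| ≤ |M1 u v| := step1
  _ ≤ |M1 u 0| + B12 * |v| := by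
      have := abs_sub_abs_le_abs_sub (M1 u v) (M1 u 0)
      linarith
  _ ≤ (|M1 0 0| + B11 * |u|) + B12 * |v| := by
      have := abs_sub_abs_le_abs_sub (M1 u 0) (M1 0 0)
      linarith
  _ = |M1 0 0| + B11 * |u| + B12 * |v| := by ring

end
end

section
/- In the WeightedERM high-dimensional setting, assume M is strictly convex and smooth with 0 < M′′ bounded above and M′′′, ∂₁₂M, ∂₂M′′ bounded (Assumption 1 parts 1 and 3), and q is Lipschitz. Then there exist constants C₁, C₂ > 0 such that for every ℓ ∈ [L], every ε ∈ ℝ, and every ϑ ∈ (0, ∞): E[M′(prox_{bϑM(·, q(Z₁, Ψ_{η_ℓ}, ε))}(Z₁·λ^{(ℓ)} + w₁^{(ℓ)}), q(Z₁, Ψ_{η_ℓ}, ε))²] ≤ C₁ + C₂ε², where Z₁ ~ N(0, Γ) and w₁^{(ℓ)} ~ N(0, κ_{ℓ,ℓ}) are independent. -/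
open MeasureTheory ProbabilityTheory
open scoped BigOperators NNReal

noncomputable section

/-- Matrix-vector multiplication for plain function-typed matrices. -/
def mvec {a b : ℕ} (A : Fin a → Fin b → ℝ) (v : Fin b → ℝ) : Fin a → ℝ :=
  fun i => ∑ j, A i j * v j

/-- Proximal operator: a minimizer of `t ↦ ρ * f t + (t - z)^2 / 2`. -/
def prox (ρ : ℝ) (f : ℝ → ℝ) (z : ℝ) : ℝ :=
  Classical.epsilon fun t => ∀ s, ρ * f t + (t - z) ^ 2 / 2 ≤ ρ * f s + (s - z) ^ 2 / 2

/-- Standard Gaussian measure on ℝ^k. -/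
def stdGaussian (k : ℕ) : Measure (Fin k → ℝ) :=
  Measure.pi fun _ => gaussianReal 0 1

/-- Centered Gaussian measure on ℝ^k with covariance matrix K (junk value `0`
if K is not positive semidefinite). -/
def gaussianCov {k : ℕ} (K : Fin k → Fin k → ℝ) : Measure (Fin k → ℝ) :=
  haveI := Classical.propDecidable ((Matrix.of K).PosSemidef)
  if h : (Matrix.of K).PosSemidef then
    (stdGaussian k).map fun g => mvec (fun i j => ((h.1.eigenvectorUnitary : Matrix (Fin k) (Fin k) ℝ) *
      Matrix.diagonal (fun x => Real.sqrt (h.1.eigenvalues x)) *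
      (star h.1.eigenvectorUnitary : Matrix (Fin k) (Fin k) ℝ)) i j) g
  else 0

/- ### Auxiliary lemmas -/

lemma prox_deriv_abs_le {f f' : ℝ → ℝ} (hf : ∀ x, HasDerivAt f (f' x) x)
    (hmono : Monotone f') {ρ : ℝ} (hρ : 0 < ρ) (z : ℝ) :
    |f' (prox ρ f z)| ≤ |f' z| := by
  set g : ℝ → ℝ := fun s => ρ * f s + (s - z) ^ 2 / 2 with hgdef
  have hgd : ∀ t, HasDerivAt g (ρ * f' t + (t - z)) t := by
    intro t
    have h1 : HasDerivAt (fun s : ℝ => (s - z) ^ 2 / 2) (t - z) t := by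
      have := (((hasDerivAt_id t).sub_const z).pow 2).div_const 2
      simpa using this
    exact ((hf t).const_mul ρ).add h1
  have hgc : Continuous g := by
    rw [continuous_iff_continuousAt]; exact fun t => (hgd t).continuousAt
  have hcvx : ∀ s, f' z * (s - z) ≤ f s - f z := by
    intro s
    rcases lt_trichotomy s z with h | h | h
    · obtain ⟨c, hc, hc'⟩ := exists_hasDerivAt_eq_slope f f' h
        (fun x _ => (hf x).continuousAt.continuousWithinAt) (fun x _ => hf x)
      have hcz : f' c ≤ f' z := hmono hc.2.le
      have hd : z - s > 0 := by linarith
      rw [eq_div_iff (by linarith : z - s ≠ 0)] at hc'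
      nlinarith [mul_le_mul_of_nonneg_right hcz hd.le]
    · simp [h]
    · obtain ⟨c, hc, hc'⟩ := exists_hasDerivAt_eq_slope f f' h
        (fun x _ => (hf x).continuousAt.continuousWithinAt) (fun x _ => hf x)
      have hcz : f' z ≤ f' c := hmono hc.1.le
      have hd : s - z > 0 := by linarith
      rw [eq_div_iff (by linarith : s - z ≠ 0)] at hc'
      nlinarith [mul_le_mul_of_nonneg_right hcz hd.le]
  set A := |f' z| with hA
  have hA0 : 0 ≤ A := abs_nonneg _
  have hA1 : f' z ≤ A := le_abs_self _
  have hA2 : -A ≤ f' z := neg_abs_le _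
  set R := 2 * ρ * A with hR
  have hR0 : 0 ≤ R := by positivity
  obtain ⟨t0, -, ht0⟩ := (isCompact_Icc (a := z - R) (b := z + R)).exists_isMinOn
    ⟨z, by constructor <;> linarith⟩ hgc.continuousOn
  have hglob : ∀ s, g t0 ≤ g s := by
    intro s
    by_cases hs : s ∈ Set.Icc (z - R) (z + R)
    · exact ht0 hs
    · have hz : g t0 ≤ g z := ht0 ⟨by linarith, by linarith⟩
      have hgz : g z = ρ * f z := by simp [hgdef]
      have hkey : g z ≤ g s := by
        rw [hgz]; show ρ * f z ≤ ρ * f s + (s - z) ^ 2 / 2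
        have h1 := mul_le_mul_of_nonneg_left (hcvx s) hρ.le
        have hout : s < z - R ∨ z + R < s := by
          by_contra hcon; push_neg at hcon; exact hs ⟨by linarith [hcon.1], hcon.2⟩
        rcases hout with h | h
        · nlinarith [mul_le_mul_of_nonpos_right hA1 (by linarith : s - z ≤ 0)]
        · nlinarith [mul_le_mul_of_nonneg_right hA2 (by linarith : (0:ℝ) ≤ s - z)]
      linarith
  have hprox : ∀ s, g (prox ρ f z) ≤ g s := by
    exact Classical.epsilon_spec
      (p := fun t => ∀ s, ρ * f t + (t - z) ^ 2 / 2 ≤ ρ * f s + (s - z) ^ 2 / 2)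
      ⟨t0, hglob⟩
  set t := prox ρ f z
  have hloc : IsLocalMin g t := Filter.Eventually.of_forall hprox
  have hzero : ρ * f' t + (t - z) = 0 := hloc.hasDerivAt_eq_zero (hgd t)
  rcases le_total t z with h | h
  · have h1 : f' t ≤ f' z := hmono h
    have h2 : 0 ≤ f' t := by nlinarith
    rw [abs_of_nonneg h2]; exact le_trans h1 hA1
  · have h1 : f' z ≤ f' t := hmono h
    have h2 : f' t ≤ 0 := by nlinarith
    rw [abs_of_nonpos h2]; linarith [neg_abs_le (f' z)]

lemma integrable_sq_gaussianReal (v : ℝ≥0) :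
    Integrable (fun x : ℝ => x ^ 2) (gaussianReal 0 v) := by
  by_cases hv : v = 0
  · subst hv
    rw [gaussianReal_zero_var]
    exact (integrable_const ((0:ℝ) ^ 2)).congr (MeasureTheory.ae_eq_dirac fun x : ℝ => x ^ 2).symm
  · rw [gaussianReal_of_var_ne_zero _ hv]
    simp only [ProbabilityTheory.gaussianPDF_def]
    rw [integrable_withDensity_iff ((measurable_gaussianPDFReal 0 v).ennreal_ofReal)
      (Filter.Eventually.of_forall fun x => ENNReal.ofReal_lt_top)]
    have hpos : (0:ℝ) < (2 * (v:ℝ))⁻¹ := by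
      have : (0:ℝ) < (v:ℝ) := lt_of_le_of_ne (v.coe_nonneg) (by exact_mod_cast (Ne.symm hv))
      positivity
    have hint := (integrable_rpow_mul_exp_neg_mul_sq hpos (s := 2) (by norm_num)).const_mul
      ((√(2 * Real.pi * v))⁻¹)
    have hint' : Integrable (fun x : ℝ =>
        (√(2 * Real.pi * v))⁻¹ * (x ^ (2:ℕ) * Real.exp (-(2 * (v:ℝ))⁻¹ * x ^ 2))) ℙ := by
      refine hint.congr (Filter.Eventually.of_forall fun x => ?_)
      simp only [Real.rpow_two]
    refine hint'.congr ?_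
    · filter_upwards with x
      rw [ENNReal.toReal_ofReal (gaussianPDFReal_nonneg _ _ _), gaussianPDFReal]
      have hexp : -(2 * (v:ℝ))⁻¹ * x ^ 2 = -(x - 0) ^ 2 / (2 * (v:ℝ)) := by
        rw [sub_zero]; ring
      rw [hexp]; ring_nf

lemma map_eval_stdGaussian {k : ℕ} (i : Fin k) :
    (stdGaussian k).map (fun g => g i) = gaussianReal 0 1 := by
  refine Measure.ext fun s hs => ?_
  rw [Measure.map_apply (measurable_pi_apply i) hs]
  have hpre : (fun g : Fin k → ℝ => g i) ⁻¹' s =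
      Set.pi Set.univ (Function.update (fun _ => Set.univ) i s) := by
    exact Set.eval_preimage
  rw [hpre, _root_.stdGaussian, Measure.pi_pi]
  rw [Finset.prod_eq_single i (fun j _ hj => by
    rw [Function.update_of_ne hj]; simp) (by simp)]
  rw [Function.update_self]

lemma integrable_eval_sq {k : ℕ} (i : Fin k) :
    Integrable (fun g : Fin k → ℝ => (g i) ^ 2) (stdGaussian k) := by
  have h := integrable_sq_gaussianReal 1
  rw [← map_eval_stdGaussian (k := k) i] at h
  exact (integrable_map_measure ((measurable_id.pow_const 2).aestronglyMeasurable)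
    (measurable_pi_apply i).aemeasurable).mp h

lemma integral_eval_sq {k : ℕ} (i : Fin k) :
    ∫ g, (g i) ^ 2 ∂stdGaussian k = ∫ x, x ^ 2 ∂gaussianReal 0 1 := by
  rw [← map_eval_stdGaussian (k := k) i]
  exact (integral_map (φ := fun g : Fin k → ℝ => g i) (f := fun x : ℝ => x ^ 2)
    (measurable_pi_apply i).aemeasurable (by fun_prop)).symm

lemma stdGaussian_linear_sq {k : ℕ} (c : Fin k → ℝ) :
    Integrable (fun g : Fin k → ℝ => (∑ j, c j * g j) ^ 2) (stdGaussian k) ∧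
    ∫ g, (∑ j, c j * g j) ^ 2 ∂stdGaussian k ≤
      (∑ j, (c j) ^ 2) * (k * ∫ x, x ^ 2 ∂gaussianReal 0 1) := by
  have hCS : ∀ g : Fin k → ℝ, (∑ j, c j * g j) ^ 2 ≤ (∑ j, (c j) ^ 2) * ∑ j, (g j) ^ 2 :=
    fun g => Finset.sum_mul_sq_le_sq_mul_sq _ _ _
  have hintb : Integrable (fun g : Fin k → ℝ => (∑ j, (c j) ^ 2) * ∑ j, (g j) ^ 2)
      (stdGaussian k) :=
    (integrable_finset_sum _ fun j _ => integrable_eval_sq j).const_mul _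
  have hmeas : AEStronglyMeasurable (fun g : Fin k → ℝ => (∑ j, c j * g j) ^ 2)
      (stdGaussian k) := by
    refine Continuous.aestronglyMeasurable ?_
    fun_prop
  have hint : Integrable (fun g : Fin k → ℝ => (∑ j, c j * g j) ^ 2) (stdGaussian k) := by
    refine hintb.mono' hmeas (Filter.Eventually.of_forall fun g => ?_)
    rw [Real.norm_eq_abs, abs_of_nonneg (sq_nonneg _)]
    exact hCS g
  refine ⟨hint, ?_⟩
  calc ∫ g, (∑ j, c j * g j) ^ 2 ∂stdGaussian k
      ≤ ∫ g, (∑ j, (c j) ^ 2) * ∑ j, (g j) ^ 2 ∂stdGaussian k := integral_mono hint hintb hCS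
    _ = (∑ j, (c j) ^ 2) * ∑ j : Fin k, ∫ g, (g j) ^ 2 ∂stdGaussian k := by
        rw [integral_const_mul, integral_finset_sum _ fun j _ => integrable_eval_sq j]
    _ = _ := by
        simp [integral_eval_sq, Finset.sum_const, mul_comm]

/-- Four-term squared-sum bound. -/
lemma four_sq_bound (p r s t : ℝ) : (p + r + s + t) ^ 2 ≤
    4 * p ^ 2 + 4 * r ^ 2 + 4 * s ^ 2 + 4 * t ^ 2 := by
  nlinarith [sq_nonneg (p - r), sq_nonneg (p - s), sq_nonneg (p - t),
    sq_nonneg (r - s), sq_nonneg (r - t), sq_nonneg (s - t)]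

set_option maxHeartbeats 2000000 in
/-- Lemma: a uniform second-moment bound on M′ at the
proximal point. Under the smoothness/boundedness parts of Assumption 1 and a
Lipschitz link q, there are constants C₁, C₂ > 0 such that for every ℓ ∈ [L],
every ε ∈ ℝ and every ϑ ∈ (0, ∞),
  E[M′(prox_{bϑM(·, q(Z₁, Ψ_{η_ℓ}, ε))}(Z₁·λ^{(ℓ)} + w₁^{(ℓ)}),
        q(Z₁, Ψ_{η_ℓ}, ε))²] ≤ C₁ + C₂ ε²,
with Z₁ ~ N(0, Γ) and w₁^{(ℓ)} ~ N(0, κ_{ℓ,ℓ}) independent. -/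
theorem M_deriv_prox_second_moment_bound (L : ℕ)
    (Γ : Fin L → Fin L → ℝ) (hΓ : (Matrix.of Γ).PosSemidef)
    (Λ : Fin L → Fin L → ℝ)      -- columns λ^{(ℓ)}
    (κ : Fin L → ℝ≥0)            -- variances κ_{ℓ,ℓ}
    (ψseg : Fin L → Fin L)       -- Ψ_{η_ℓ}: signal index on the ℓ-th segment
    (b : ℝ) (hb : 0 < b)
    -- q Lipschitz
    (q : ℝ → ℝ → ℝ) (Cq : ℝ≥0)
    (hq : LipschitzWith Cq fun x : ℝ × ℝ => q x.1 x.2)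
    -- the loss: strictly convex, smooth, with bounded derivatives
    (M M1 M2 M3 M12 M2v : ℝ → ℝ → ℝ)
    (hMsc : ∀ v, StrictConvexOn ℝ Set.univ fun t => M t v)
    (hM1 : ∀ u v, HasDerivAt (fun t => M t v) (M1 u v) u)
    (hM2 : ∀ u v, HasDerivAt (fun t => M1 t v) (M2 u v) u)
    (hM3 : ∀ u v, HasDerivAt (fun t => M2 t v) (M3 u v) u)
    (hM12 : ∀ u v, HasDerivAt (fun w => M1 u w) (M12 u v) v)
    (hM2v : ∀ u v, HasDerivAt (fun w => M2 u w) (M2v u v) v)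
    (hM2pos : ∀ u v, 0 < M2 u v)
    (B2 B3 B12 B2v : ℝ)
    (hM2bdd : ∀ u v, M2 u v ≤ B2)
    (hM3bdd : ∀ u v, |M3 u v| ≤ B3)
    (hM12bdd : ∀ u v, |M12 u v| ≤ B12)
    (hM2vbdd : ∀ u v, |M2v u v| ≤ B2v) :
    ∃ C1 C2 : ℝ, 0 < C1 ∧ 0 < C2 ∧
      ∀ (ℓ : Fin L) (ε ϑ : ℝ), 0 < ϑ →
        (∫ z, (∫ w,
            (M1 (prox (b * ϑ) (fun t => M t (q (z (ψseg ℓ)) ε))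
                ((∑ k, z k * Λ k ℓ) + w))
              (q (z (ψseg ℓ)) ε)) ^ 2
          ∂(gaussianReal 0 (κ ℓ))) ∂(gaussianCov Γ)) ≤ C1 + C2 * ε ^ 2 := by
  classical
  -- basic constants
  set J : ℝ := ∫ x, x ^ 2 ∂gaussianReal 0 1 with hJdef
  have hJ0 : 0 ≤ J := integral_nonneg fun x => sq_nonneg x
  have hB2pos : 0 < B2 := lt_of_lt_of_le (hM2pos 0 0) (hM2bdd 0 0)
  have hB12nn : 0 ≤ B12 := le_trans (abs_nonneg _) (hM12bdd 0 0)
  have hCqnn : (0:ℝ) ≤ (Cq : ℝ) := Cq.coe_nonneg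
  set S : Fin L → Fin L → ℝ := fun i j => ((hΓ.1.eigenvectorUnitary : Matrix (Fin L) (Fin L) ℝ) * Matrix.diagonal (fun x => Real.sqrt (hΓ.1.eigenvalues x)) * (star hΓ.1.eigenvectorUnitary : Matrix (Fin L) (Fin L) ℝ)) i j with hSdef
  -- the covariance measure as a map
  have hcov : gaussianCov Γ = (stdGaussian L).map (fun g => mvec (fun i j => ((hΓ.1.eigenvectorUnitary : Matrix (Fin L) (Fin L) ℝ) * Matrix.diagonal (fun x => Real.sqrt (hΓ.1.eigenvalues x)) * (star hΓ.1.eigenvectorUnitary : Matrix (Fin L) (Fin L) ℝ)) i j) g) := by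
    rw [gaussianCov, dif_pos hΓ]
  have hAmeas : Measurable (fun g : Fin L → ℝ => mvec (fun i j => ((hΓ.1.eigenvectorUnitary : Matrix (Fin L) (Fin L) ℝ) * Matrix.diagonal (fun x => Real.sqrt (hΓ.1.eigenvalues x)) * (star hΓ.1.eigenvectorUnitary : Matrix (Fin L) (Fin L) ℝ)) i j) g) := by
    refine measurable_pi_lambda _ fun i => ?_
    exact Finset.measurable_sum _ fun j _ => (measurable_pi_apply j).const_mul _
  haveI hstdprob : IsProbabilityMeasure (stdGaussian L) := by
    rw [_root_.stdGaussian]; infer_instance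
  haveI hprob : IsProbabilityMeasure (gaussianCov Γ) := by
    rw [hcov]; exact Measure.isProbabilityMeasure_map hAmeas.aemeasurable
  -- transfer of second moments of linear functionals to gaussianCov
  have hlin : ∀ c : Fin L → ℝ,
      Integrable (fun z : Fin L → ℝ => (∑ i, c i * z i) ^ 2) (gaussianCov Γ) ∧
      ∫ z, (∑ i, c i * z i) ^ 2 ∂gaussianCov Γ ≤
        (∑ j, (∑ i, c i * S i j) ^ 2) * (L * J) := by
    intro c
    have hswap : ∀ g : Fin L → ℝ,
        (∑ i, c i * mvec (fun i j => ((hΓ.1.eigenvectorUnitary : Matrix (Fin L) (Fin L) ℝ) * Matrix.diagonal (fun x => Real.sqrt (hΓ.1.eigenvalues x)) * (star hΓ.1.eigenvectorUnitary : Matrix (Fin L) (Fin L) ℝ)) i j) g i) = ∑ j, (∑ i, c i * S i j) * g j := by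
      intro g
      simp only [mvec, Finset.mul_sum, hSdef]
      rw [Finset.sum_comm]
      refine Finset.sum_congr rfl fun j _ => ?_
      rw [Finset.sum_mul]
      refine Finset.sum_congr rfl fun i _ => by ring
    obtain ⟨h1, h2⟩ := stdGaussian_linear_sq (fun j => ∑ i, c i * S i j)
    have hfun : ((fun z : Fin L → ℝ => (∑ i, c i * z i) ^ 2) ∘
        fun g => mvec (fun i j => ((hΓ.1.eigenvectorUnitary : Matrix (Fin L) (Fin L) ℝ) * Matrix.diagonal (fun x => Real.sqrt (hΓ.1.eigenvalues x)) * (star hΓ.1.eigenvectorUnitary : Matrix (Fin L) (Fin L) ℝ)) i j) g)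
        = fun g : Fin L → ℝ => (∑ j, (∑ i, c i * S i j) * g j) ^ 2 := by
      funext g; simp only [Function.comp_apply]; rw [hswap g]
    have hsm : AEStronglyMeasurable (fun z : Fin L → ℝ => (∑ i, c i * z i) ^ 2)
        ((stdGaussian L).map (fun g => mvec (fun i j => ((hΓ.1.eigenvectorUnitary : Matrix (Fin L) (Fin L) ℝ) * Matrix.diagonal (fun x => Real.sqrt (hΓ.1.eigenvalues x)) * (star hΓ.1.eigenvectorUnitary : Matrix (Fin L) (Fin L) ℝ)) i j) g)) := by
      refine Continuous.aestronglyMeasurable ?_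
      fun_prop
    constructor
    · rw [hcov, integrable_map_measure hsm hAmeas.aemeasurable, hfun]
      exact h1
    · rw [hcov, integral_map hAmeas.aemeasurable hsm]
      calc ∫ g, (∑ i, c i * mvec (fun i j => ((hΓ.1.eigenvectorUnitary : Matrix (Fin L) (Fin L) ℝ) * Matrix.diagonal (fun x => Real.sqrt (hΓ.1.eigenvalues x)) * (star hΓ.1.eigenvectorUnitary : Matrix (Fin L) (Fin L) ℝ)) i j) g i) ^ 2 ∂stdGaussian L
          = ∫ g, (∑ j, (∑ i, c i * S i j) * g j) ^ 2 ∂stdGaussian L := by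
            refine integral_congr_ae (Filter.Eventually.of_forall fun g => ?_)
            simp only [hswap]
        _ ≤ _ := h2
  -- monotonicity of M1 in the first variable
  have hM1mono : ∀ v : ℝ, Monotone fun t => M1 t v := by
    intro v
    refine (strictMono_of_deriv_pos fun x => ?_).monotone
    rw [(hM2 x v).deriv]; exact hM2pos x v
  -- linear growth of M1
  have hgrow : ∀ x v : ℝ, |M1 x v| ≤ |M1 0 0| + B2 * |x| + B12 * |v| := by
    intro x v
    have h1 : |M1 x v - M1 0 v| ≤ B2 * |x| := by
      have := Convex.norm_image_sub_le_of_norm_hasDerivWithin_le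
        (f := fun t => M1 t v) (f' := fun t => M2 t v) (s := Set.univ) (C := B2)
        (fun u _ => (hM2 u v).hasDerivWithinAt)
        (fun u _ => by rw [Real.norm_eq_abs, abs_of_pos (hM2pos u v)]; exact hM2bdd u v)
        convex_univ (Set.mem_univ 0) (Set.mem_univ x)
      simpa [Real.norm_eq_abs] using this
    have h2 : |M1 0 v - M1 0 0| ≤ B12 * |v| := by
      have := Convex.norm_image_sub_le_of_norm_hasDerivWithin_le
        (f := fun w => M1 0 w) (f' := fun w => M12 0 w) (s := Set.univ) (C := B12)
        (fun u _ => (hM12 0 u).hasDerivWithinAt)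
        (fun u _ => by rw [Real.norm_eq_abs]; exact hM12bdd 0 u)
        convex_univ (Set.mem_univ 0) (Set.mem_univ v)
      simpa [Real.norm_eq_abs] using this
    have h3 : |M1 x v| ≤ |M1 x v - M1 0 v| + |M1 0 v - M1 0 0| + |M1 0 0| := by
      have := abs_add_le (M1 x v - M1 0 v + (M1 0 v - M1 0 0)) (M1 0 0)
      have h4 := abs_add_le (M1 x v - M1 0 v) (M1 0 v - M1 0 0)
      have h5 : M1 x v - M1 0 v + (M1 0 v - M1 0 0) + M1 0 0 = M1 x v := by ring
      rw [h5] at this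
      linarith
    linarith
  -- Lipschitz growth of q
  have hqgrow : ∀ aa ε : ℝ, |q aa ε| ≤ |q 0 0| + (Cq:ℝ) * (|aa| + |ε|) := by
    intro aa ε
    have hd := hq.dist_le_mul (aa, ε) (0, 0)
    rw [Prod.dist_eq] at hd
    simp only [Real.dist_eq, sub_zero] at hd
    have hmax : max |aa| |ε| ≤ |aa| + |ε| :=
      max_le (by linarith [abs_nonneg ε]) (by linarith [abs_nonneg aa])
    have h1 : |q aa ε - q 0 0| ≤ (Cq:ℝ) * (|aa| + |ε|) :=
      le_trans hd (mul_le_mul_of_nonneg_left hmax hCqnn)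
    have h2 : |q aa ε| - |q 0 0| ≤ |q aa ε - q 0 0| := abs_sub_abs_le_abs_sub _ _
    linarith
  -- constants
  set a : ℝ := |M1 0 0| + B12 * |q 0 0| with hadef
  set cc : ℝ := B12 * (Cq:ℝ) with hccdef
  have ha0 : 0 ≤ a := by positivity
  have hcc0 : 0 ≤ cc := by positivity
  set Vsum : ℝ := ∑ ℓ' : Fin L, ∫ w, w ^ 2 ∂gaussianReal 0 (κ ℓ') with hVdef
  have hVsum0 : 0 ≤ Vsum :=
    Finset.sum_nonneg fun ℓ' _ => integral_nonneg fun w => sq_nonneg w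
  set Wsum : ℝ := ∑ ℓ' : Fin L,
      ((∑ j, (∑ i, Λ i ℓ' * S i j) ^ 2) + (∑ j, (S (ψseg ℓ') j) ^ 2)) * (L * J) with hWdef
  have hWsum0 : 0 ≤ Wsum := by
    refine Finset.sum_nonneg fun ℓ' _ => mul_nonneg ?_ (by positivity)
    exact add_nonneg (Finset.sum_nonneg fun j _ => sq_nonneg _)
      (Finset.sum_nonneg fun j _ => sq_nonneg _)
  refine ⟨4 * a ^ 2 + 8 * B2 ^ 2 * Vsum + (8 * B2 ^ 2 + 4 * cc ^ 2) * Wsum + 1,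
    4 * cc ^ 2 + 1, ?_, ?_, ?_⟩
  · have h1 : 0 ≤ 4 * a ^ 2 := by positivity
    have h2 : 0 ≤ 8 * B2 ^ 2 * Vsum := by positivity
    have h3 : 0 ≤ (8 * B2 ^ 2 + 4 * cc ^ 2) * Wsum := by positivity
    linarith
  · positivity
  intro ℓ ε ϑ hϑ
  have hρ : 0 < b * ϑ := mul_pos hb hϑ
  set ψ := ψseg ℓ
  set Vℓ : ℝ := ∫ w, w ^ 2 ∂gaussianReal 0 (κ ℓ) with hVldef
  have hVℓVsum : Vℓ ≤ Vsum := by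
    refine Finset.single_le_sum (f := fun ℓ' => ∫ w, w ^ 2 ∂gaussianReal 0 (κ ℓ'))
      (fun ℓ' _ => integral_nonneg fun w => sq_nonneg w) (Finset.mem_univ ℓ)
  -- pointwise bound on the integrand
  have hptw : ∀ (z : Fin L → ℝ) (w : ℝ),
      (M1 (prox (b * ϑ) (fun t => M t (q (z ψ) ε)) ((∑ k, z k * Λ k ℓ) + w))
        (q (z ψ) ε)) ^ 2 ≤
      4 * a ^ 2 + 4 * B2 ^ 2 * ((∑ k, z k * Λ k ℓ) + w) ^ 2
        + 4 * cc ^ 2 * (z ψ) ^ 2 + 4 * cc ^ 2 * ε ^ 2 := by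
    intro z w
    set v := q (z ψ) ε with hv
    set x := (∑ k, z k * Λ k ℓ) + w with hx
    have h1 : |M1 (prox (b * ϑ) (fun t => M t v) x) v| ≤ |M1 x v| :=
      prox_deriv_abs_le (fun u => hM1 u v) (hM1mono v) hρ x
    have h2 : |M1 x v| ≤ |M1 0 0| + B2 * |x| + B12 * |v| := hgrow x v
    have h3 : |v| ≤ |q 0 0| + (Cq:ℝ) * (|z ψ| + |ε|) := hqgrow (z ψ) ε
    have h4 : |M1 (prox (b * ϑ) (fun t => M t v) x) v| ≤
        a + B2 * |x| + cc * |z ψ| + cc * |ε| := by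
      have h35 := mul_le_mul_of_nonneg_left h3 hB12nn
      calc |M1 (prox (b * ϑ) (fun t => M t v) x) v| ≤ |M1 0 0| + B2 * |x| + B12 * |v| :=
            le_trans h1 h2
        _ ≤ _ := by rw [hadef, hccdef]; nlinarith [h35]
    have h5 : (M1 (prox (b * ϑ) (fun t => M t v) x) v) ^ 2 ≤
        (a + B2 * |x| + cc * |z ψ| + cc * |ε|) ^ 2 := by
      rw [← sq_abs]
      have hT0 : 0 ≤ a + B2 * |x| + cc * |z ψ| + cc * |ε| := by positivity
      exact pow_le_pow_left₀ (abs_nonneg _) h4 2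
    have h6 := four_sq_bound a (B2 * |x|) (cc * |z ψ|) (cc * |ε|)
    have h7 : 4 * (B2 * |x|) ^ 2 = 4 * B2 ^ 2 * x ^ 2 := by
      rw [mul_pow, sq_abs]; ring
    have h8 : 4 * (cc * |z ψ|) ^ 2 = 4 * cc ^ 2 * (z ψ) ^ 2 := by
      rw [mul_pow, sq_abs]; ring
    have h9 : 4 * (cc * |ε|) ^ 2 = 4 * cc ^ 2 * ε ^ 2 := by
      rw [mul_pow, sq_abs]; ring
    calc (M1 (prox (b * ϑ) (fun t => M t v) x) v) ^ 2
        ≤ (a + B2 * |x| + cc * |z ψ| + cc * |ε|) ^ 2 := h5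
      _ ≤ 4 * a ^ 2 + 4 * (B2 * |x|) ^ 2 + 4 * (cc * |z ψ|) ^ 2 + 4 * (cc * |ε|) ^ 2 := h6
      _ = 4 * a ^ 2 + 4 * B2 ^ 2 * x ^ 2 + 4 * cc ^ 2 * (z ψ) ^ 2 + 4 * cc ^ 2 * ε ^ 2 := by
          rw [h7, h8, h9]
  -- inner integral bound
  have hinner : ∀ z : Fin L → ℝ,
      (∫ w, (M1 (prox (b * ϑ) (fun t => M t (q (z ψ) ε)) ((∑ k, z k * Λ k ℓ) + w))
          (q (z ψ) ε)) ^ 2 ∂gaussianReal 0 (κ ℓ)) ≤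
      8 * B2 ^ 2 * (∑ k, z k * Λ k ℓ) ^ 2 + (4 * cc ^ 2 * (z ψ) ^ 2
        + (4 * a ^ 2 + 4 * cc ^ 2 * ε ^ 2 + 8 * B2 ^ 2 * Vℓ)) := by
    intro z
    set Szz := (∑ k, z k * Λ k ℓ) with hSzz
    have hgb : ∀ w : ℝ,
        (M1 (prox (b * ϑ) (fun t => M t (q (z ψ) ε)) (Szz + w)) (q (z ψ) ε)) ^ 2 ≤
        (4 * a ^ 2 + 8 * B2 ^ 2 * Szz ^ 2 + 4 * cc ^ 2 * (z ψ) ^ 2 + 4 * cc ^ 2 * ε ^ 2)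
          + 8 * B2 ^ 2 * w ^ 2 := by
      intro w
      have h1 := hptw z w
      have h2 : (Szz + w) ^ 2 ≤ 2 * Szz ^ 2 + 2 * w ^ 2 := by nlinarith [sq_nonneg (Szz - w)]
      nlinarith [sq_nonneg B2]
    have hgint : Integrable (fun w : ℝ =>
        (4 * a ^ 2 + 8 * B2 ^ 2 * Szz ^ 2 + 4 * cc ^ 2 * (z ψ) ^ 2 + 4 * cc ^ 2 * ε ^ 2)
          + 8 * B2 ^ 2 * w ^ 2) (gaussianReal 0 (κ ℓ)) :=
      (integrable_const _).add ((integrable_sq_gaussianReal (κ ℓ)).const_mul _)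
    have hmono := integral_mono_of_nonneg
      (Filter.Eventually.of_forall fun w => sq_nonneg _)
      hgint (Filter.Eventually.of_forall hgb)
    have hval : (∫ w, ((4 * a ^ 2 + 8 * B2 ^ 2 * Szz ^ 2 + 4 * cc ^ 2 * (z ψ) ^ 2
          + 4 * cc ^ 2 * ε ^ 2) + 8 * B2 ^ 2 * w ^ 2) ∂gaussianReal 0 (κ ℓ)) =
        (4 * a ^ 2 + 8 * B2 ^ 2 * Szz ^ 2 + 4 * cc ^ 2 * (z ψ) ^ 2 + 4 * cc ^ 2 * ε ^ 2)
          + 8 * B2 ^ 2 * Vℓ := by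
      rw [integral_add (integrable_const _) ((integrable_sq_gaussianReal (κ ℓ)).const_mul _),
        integral_const, integral_const_mul]
      simp [hVldef]
    rw [hval] at hmono
    calc _ ≤ _ := hmono
      _ = 8 * B2 ^ 2 * Szz ^ 2 + (4 * cc ^ 2 * (z ψ) ^ 2
        + (4 * a ^ 2 + 4 * cc ^ 2 * ε ^ 2 + 8 * B2 ^ 2 * Vℓ)) := by ring
  -- outer integral
  have hlin1 := hlin (fun k => Λ k ℓ)
  have hzψfun : (fun z : Fin L → ℝ =>
      (∑ i, (if i = ψ then (1:ℝ) else 0) * z i) ^ 2) = fun z => (z ψ) ^ 2 := by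
    funext z
    congr 1
    rw [Finset.sum_eq_single ψ (fun i _ hi => by simp [hi]) (by simp)]
    simp
  have hlin2 := hlin (fun i => if i = ψ then (1:ℝ) else 0)
  rw [hzψfun] at hlin2
  have hSψ : ∀ j, (∑ i, (if i = ψ then (1:ℝ) else 0) * S i j) = S ψ j := fun j => by
    rw [Finset.sum_eq_single ψ (fun i _ hi => by simp [hi]) (by simp)]; simp
  simp only [hSψ] at hlin2
  have hΛfun : (fun z : Fin L → ℝ => (∑ i, (fun k => Λ k ℓ) i * z i) ^ 2)
      = fun z => (∑ k, z k * Λ k ℓ) ^ 2 := by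
    funext z
    congr 1
    exact Finset.sum_congr rfl fun i _ => mul_comm _ _
  rw [hΛfun] at hlin1
  -- outer bound function is integrable
  have hGint : Integrable (fun z : Fin L → ℝ =>
      8 * B2 ^ 2 * (∑ k, z k * Λ k ℓ) ^ 2 + (4 * cc ^ 2 * (z ψ) ^ 2
        + (4 * a ^ 2 + 4 * cc ^ 2 * ε ^ 2 + 8 * B2 ^ 2 * Vℓ))) (gaussianCov Γ) :=
    (hlin1.1.const_mul _).add ((hlin2.1.const_mul _).add (integrable_const _))
  have houter := integral_mono_of_nonneg
    (Filter.Eventually.of_forall fun z =>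
      integral_nonneg fun w => sq_nonneg _)
    hGint (Filter.Eventually.of_forall hinner)
  have hGval : (∫ z, (8 * B2 ^ 2 * (∑ k, z k * Λ k ℓ) ^ 2 + (4 * cc ^ 2 * (z ψ) ^ 2
        + (4 * a ^ 2 + 4 * cc ^ 2 * ε ^ 2 + 8 * B2 ^ 2 * Vℓ))) ∂gaussianCov Γ) =
      8 * B2 ^ 2 * (∫ z, (∑ k, z k * Λ k ℓ) ^ 2 ∂gaussianCov Γ)
        + (4 * cc ^ 2 * (∫ z, (z ψ) ^ 2 ∂gaussianCov Γ)
        + (4 * a ^ 2 + 4 * cc ^ 2 * ε ^ 2 + 8 * B2 ^ 2 * Vℓ)) := by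
    have hint2 : Integrable (fun z : Fin L → ℝ => 4 * cc ^ 2 * (z ψ) ^ 2
        + (4 * a ^ 2 + 4 * cc ^ 2 * ε ^ 2 + 8 * B2 ^ 2 * Vℓ)) (gaussianCov Γ) :=
      (hlin2.1.const_mul _).add (integrable_const _)
    rw [integral_add (hlin1.1.const_mul _) hint2]
    rw [integral_add (hlin2.1.const_mul _) (integrable_const _),
      integral_const_mul, integral_const_mul, integral_const]
    simp
  rw [hGval] at houter
  -- bound the two quadratic moments by Wsum
  have hLJ0 : 0 ≤ (L:ℝ) * J := by positivity
  have hW1 : (∑ j, (∑ i, Λ i ℓ * S i j) ^ 2) * (L * J) ≤ Wsum := by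
    have hterm : (∑ j, (∑ i, Λ i ℓ * S i j) ^ 2) * (L * J) ≤
        ((∑ j, (∑ i, Λ i ℓ * S i j) ^ 2) + (∑ j, (S ψ j) ^ 2)) * (L * J) := by
      refine mul_le_mul_of_nonneg_right ?_ hLJ0
      have : 0 ≤ ∑ j, (S ψ j) ^ 2 := Finset.sum_nonneg fun j _ => sq_nonneg _
      linarith
    refine le_trans hterm ?_
    exact Finset.single_le_sum (f := fun ℓ' =>
        ((∑ j, (∑ i, Λ i ℓ' * S i j) ^ 2) + (∑ j, (S (ψseg ℓ') j) ^ 2)) * (L * J))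
      (fun ℓ' _ => mul_nonneg (add_nonneg (Finset.sum_nonneg fun j _ => sq_nonneg _)
        (Finset.sum_nonneg fun j _ => sq_nonneg _)) hLJ0) (Finset.mem_univ ℓ)
  have hW2 : (∑ j, (S ψ j) ^ 2) * (L * J) ≤ Wsum := by
    have hterm : (∑ j, (S ψ j) ^ 2) * (L * J) ≤
        ((∑ j, (∑ i, Λ i ℓ * S i j) ^ 2) + (∑ j, (S ψ j) ^ 2)) * (L * J) := by
      refine mul_le_mul_of_nonneg_right ?_ hLJ0
      have : 0 ≤ ∑ j, (∑ i, Λ i ℓ * S i j) ^ 2 := Finset.sum_nonneg fun j _ => sq_nonneg _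
      linarith
    refine le_trans hterm ?_
    exact Finset.single_le_sum (f := fun ℓ' =>
        ((∑ j, (∑ i, Λ i ℓ' * S i j) ^ 2) + (∑ j, (S (ψseg ℓ') j) ^ 2)) * (L * J))
      (fun ℓ' _ => mul_nonneg (add_nonneg (Finset.sum_nonneg fun j _ => sq_nonneg _)
        (Finset.sum_nonneg fun j _ => sq_nonneg _)) hLJ0) (Finset.mem_univ ℓ)
  have hm1 : (∫ z, (∑ k, z k * Λ k ℓ) ^ 2 ∂gaussianCov Γ) ≤ Wsum := le_trans hlin1.2 hW1
  have hm2 : (∫ z, (z ψ) ^ 2 ∂gaussianCov Γ) ≤ Wsum := le_trans hlin2.2 hW2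
  have hm1' : 8 * B2 ^ 2 * (∫ z, (∑ k, z k * Λ k ℓ) ^ 2 ∂gaussianCov Γ) ≤ 8 * B2 ^ 2 * Wsum :=
    mul_le_mul_of_nonneg_left hm1 (by positivity)
  have hm2' : 4 * cc ^ 2 * (∫ z, (z ψ) ^ 2 ∂gaussianCov Γ) ≤ 4 * cc ^ 2 * Wsum :=
    mul_le_mul_of_nonneg_left hm2 (by positivity)
  have hVb : 8 * B2 ^ 2 * Vℓ ≤ 8 * B2 ^ 2 * Vsum :=
    mul_le_mul_of_nonneg_left hVℓVsum (by positivity)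
  have hε0 : 0 ≤ ε ^ 2 := sq_nonneg ε
  calc (∫ z, (∫ w,
            (M1 (prox (b * ϑ) (fun t => M t (q (z ψ) ε))
                ((∑ k, z k * Λ k ℓ) + w))
              (q (z ψ) ε)) ^ 2
          ∂(gaussianReal 0 (κ ℓ))) ∂(gaussianCov Γ))
      ≤ _ := houter
    _ ≤ 4 * a ^ 2 + 8 * B2 ^ 2 * Vsum + (8 * B2 ^ 2 + 4 * cc ^ 2) * Wsum + 1
        + (4 * cc ^ 2 + 1) * ε ^ 2 := by nlinarith
end
end
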